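/- Let π^{μ,r} be a stationary point of RMD with mutation rate μ ∈ (0,1] and interior reference profile r. Let π^t ∈ Δ°(A₁) × Δ°(A₂) be a fully supported profile with π_i^t(a) ≥ ρ for all i, a for some ρ > 0, and let π^{t+1} be the M2WU full-feedback update of π^t with learning rate η satisfying 0 < η < 1/(2u_max + (μ/ρ) max_{i,a} r_i(a)). Then KL(π^t, π^{t+1}) ≤ 8η²u_max² Σ_{i=1}^{2} ‖π_i^t − π_i^{μ,r}‖₁² + 8η²μ² Σ_{i=1}^{2} Σ_{a∈A_i} r_i(a)² (1/π_i^{μ,r}(a) − 1/π_i^t(a))². -/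
import Mathlib


open Finset Real

noncomputable section

/-- `p` is a point of the probability simplex over `A`. -/
def isSimplex {A : Type*} [Fintype A] (p : A → ℝ) : Prop :=
  (∀ a, 0 ≤ p a) ∧ ∑ a, p a = 1

/-- `p` is a point of the relative interior of the probability simplex over `A`. -/
def isInterior {A : Type*} [Fintype A] (p : A → ℝ) : Prop :=
  (∀ a, 0 < p a) ∧ ∑ a, p a = 1

/-- Player 1's expected utility in the zero-sum game with payoff `u`. -/
def v1 {A1 A2 : Type*} [Fintype A1] [Fintype A2] (u : A1 → A2 → ℝ)
    (x : A1 → ℝ) (y : A2 → ℝ) : ℝ :=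
  ∑ a, ∑ b, x a * y b * u a b

/-- Player 1's conditional expected utility of action `a` against `y`. -/
def q1 {A1 A2 : Type*} [Fintype A2] (u : A1 → A2 → ℝ) (y : A2 → ℝ) (a : A1) : ℝ :=
  ∑ b, y b * u a b

/-- Player 2's conditional expected utility of action `b` against `x` (utility `-u`). -/
def q2 {A1 A2 : Type*} [Fintype A1] (u : A1 → A2 → ℝ) (x : A1 → ℝ) (b : A2) : ℝ :=
  ∑ a, x a * (- u a b)

/-- Kullback–Leibler divergence. -/
def KL {A : Type*} [Fintype A] (p q : A → ℝ) : ℝ :=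
  ∑ a, p a * Real.log (p a / q a)

/-- Sum of KL divergences over the two players. -/
def KL2 {A1 A2 : Type*} [Fintype A1] [Fintype A2]
    (σ σ' : (A1 → ℝ) × (A2 → ℝ)) : ℝ :=
  KL σ.1 σ'.1 + KL σ.2 σ'.2

/-- `σ` is a stationary point of the replicator-mutator dynamics with mutation
rate `μ` and reference profile `r`. -/
def isStationary {A1 A2 : Type*} [Fintype A1] [Fintype A2] (u : A1 → A2 → ℝ) (μ : ℝ)
    (r σ : (A1 → ℝ) × (A2 → ℝ)) : Prop :=
  isSimplex σ.1 ∧ isSimplex σ.2 ∧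
  (∀ a, σ.1 a * (q1 u σ.2 a - v1 u σ.1 σ.2) + μ * (r.1 a - σ.1 a) = 0) ∧
  (∀ b, σ.2 b * (q2 u σ.1 b - (- v1 u σ.1 σ.2)) + μ * (r.2 b - σ.2 b) = 0)

/-- One multiplicative-weights step with learning rate `η` and gain vector `g`. -/
def mwuStep {A : Type*} [Fintype A] (η : ℝ) (g p : A → ℝ) : A → ℝ :=
  fun a => p a * Real.exp (η * g a) / ∑ a', p a' * Real.exp (η * g a')

/-- Player 1's mutation gradient. -/
def qmu1 {A1 A2 : Type*} [Fintype A2] (u : A1 → A2 → ℝ) (μ : ℝ) (r1 : A1 → ℝ)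
    (x : A1 → ℝ) (y : A2 → ℝ) (a : A1) : ℝ :=
  q1 u y a + μ / x a * (r1 a - x a)

/-- Player 2's mutation gradient. -/
def qmu2 {A1 A2 : Type*} [Fintype A1] (u : A1 → A2 → ℝ) (μ : ℝ) (r2 : A2 → ℝ)
    (x : A1 → ℝ) (y : A2 → ℝ) (b : A2) : ℝ :=
  q2 u x b + μ / y b * (r2 b - y b)

/-- `σ` is a trajectory of M2WU with full feedback, learning rates `η`. -/
def isM2WU {A1 A2 : Type*} [Fintype A1] [Fintype A2] (u : A1 → A2 → ℝ) (μ : ℝ)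
    (r : (A1 → ℝ) × (A2 → ℝ)) (η : ℕ → ℝ) (σ : ℕ → (A1 → ℝ) × (A2 → ℝ)) : Prop :=
  ∀ t, (σ (t+1)).1 = mwuStep (η t) (qmu1 u μ r.1 (σ t).1 (σ t).2) (σ t).1 ∧
       (σ (t+1)).2 = mwuStep (η t) (qmu2 u μ r.2 (σ t).1 (σ t).2) (σ t).2

/-- Exploitability of a strategy profile. -/
def explt {A1 A2 : Type*} [Fintype A1] [Fintype A2] (u : A1 → A2 → ℝ)
    (σ : (A1 → ℝ) × (A2 → ℝ)) : ℝ :=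
  (⨆ x : {p : A1 → ℝ // isSimplex p}, v1 u x.1 σ.2) +
  (⨆ y : {p : A2 → ℝ // isSimplex p}, - v1 u σ.1 y.1)

/-- Nash equilibrium of the two-player zero-sum game with payoff `u`. -/
def isNash {A1 A2 : Type*} [Fintype A1] [Fintype A2] (u : A1 → A2 → ℝ)
    (σ : (A1 → ℝ) × (A2 → ℝ)) : Prop :=
  isSimplex σ.1 ∧ isSimplex σ.2 ∧
  (∀ y, isSimplex y → v1 u σ.1 σ.2 ≤ v1 u σ.1 y) ∧
  (∀ x, isSimplex x → v1 u x σ.2 ≤ v1 u σ.1 σ.2)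

/-- ℓ¹ norm of a finitely supported vector. -/
def l1norm {A : Type*} [Fintype A] (p : A → ℝ) : ℝ := ∑ a, |p a|

/-- Euclidean distance between two profiles (concatenated coordinates). -/
def dist2 {A1 A2 : Type*} [Fintype A1] [Fintype A2]
    (σ σ' : (A1 → ℝ) × (A2 → ℝ)) : ℝ :=
  Real.sqrt ((∑ a, (σ.1 a - σ'.1 a) ^ 2) + (∑ b, (σ.2 b - σ'.2 b) ^ 2))
lemma exp_le_quad {z : ℝ} (hz : z ≤ 1) : Real.exp z ≤ 1 + z + z ^ 2 := by
  rcases le_or_gt (-1) z with h | h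
  · have habs : |z| ≤ 1 := abs_le.mpr ⟨h, hz⟩
    have h2 := Real.exp_bound habs (n := 2) (by norm_num)
    have hr : ∑ m ∈ Finset.range 2, z ^ m / m.factorial = 1 + z := by
      simp [Finset.sum_range_succ]
    rw [hr] at h2
    have h3 := (abs_sub_le_iff.1 h2).1
    have h4 : |z| ^ 2 = z ^ 2 := sq_abs z
    norm_num [Nat.factorial] at h3
    nlinarith [sq_nonneg z]
  · have h1 : Real.exp z < Real.exp 0 := Real.exp_lt_exp.mpr (by linarith)
    rw [Real.exp_zero] at h1
    nlinarith


lemma kl_mwu_bound {A : Type*} [Fintype A]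
    (η : ℝ) (g : A → ℝ) (c : ℝ) (p : A → ℝ)
    (hp : ∀ a, 0 < p a) (hs : ∑ a, p a = 1)
    (hb : ∀ a, η * (g a - c) ≤ 1) :
    KL p (mwuStep η g p) ≤ η ^ 2 * ∑ a, p a * (g a - c) ^ 2 := by
  classical
  set Z : ℝ := ∑ a', p a' * Real.exp (η * g a') with hZdef
  have hne : (Finset.univ : Finset A).Nonempty := by
    rcases (Finset.univ : Finset A).eq_empty_or_nonempty with h | h
    · rw [h, Finset.sum_empty] at hs; norm_num at hs
    · exact h
  have hZpos : 0 < Z := Finset.sum_pos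
    (fun a _ => mul_pos (hp a) (Real.exp_pos _)) hne
  set Z' : ℝ := ∑ a, p a * Real.exp (η * (g a - c)) with hZ'def
  have hZ'pos : 0 < Z' := Finset.sum_pos
    (fun a _ => mul_pos (hp a) (Real.exp_pos _)) hne
  have hZZ' : Z = Real.exp (η * c) * Z' := by
    rw [hZ'def, Finset.mul_sum, hZdef]
    refine Finset.sum_congr rfl fun a _ => ?_
    rw [← mul_assoc, mul_comm (Real.exp (η * c)) (p a), mul_assoc, ← Real.exp_add]
    ring_nf
  have hKL : KL p (mwuStep η g p) = Real.log Z - η * ∑ a, p a * g a := by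
    unfold KL mwuStep
    have key : ∀ a, p a * Real.log (p a / (p a * Real.exp (η * g a) / Z))
        = p a * Real.log Z - p a * (η * g a) := by
      intro a
      have h1 : p a / (p a * Real.exp (η * g a) / Z) = Z / Real.exp (η * g a) := by
        rw [div_div_eq_mul_div, mul_div_mul_left _ _ (hp a).ne']
      rw [h1, Real.log_div hZpos.ne' (Real.exp_ne_zero _), Real.log_exp]
      ring
    rw [Finset.sum_congr rfl (fun a _ => key a), Finset.sum_sub_distrib,
      ← Finset.sum_mul, hs, one_mul, Finset.mul_sum]
    congr 1
    exact Finset.sum_congr rfl fun a _ => by ring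
  set S : ℝ := ∑ a, p a * (g a - c) with hSdef
  set T : ℝ := ∑ a, p a * (g a - c) ^ 2 with hTdef
  have hSg : ∑ a, p a * g a = S + c := by
    have key : ∀ a, p a * g a = p a * (g a - c) + p a * c := fun a => by ring
    rw [Finset.sum_congr rfl fun a _ => key a, Finset.sum_add_distrib,
      ← Finset.sum_mul, hs, one_mul]
  have hZ'le : Z' ≤ 1 + η * S + η ^ 2 * T := by
    have hpt : ∀ a, p a * Real.exp (η * (g a - c))
        ≤ p a * (1 + η * (g a - c) + (η * (g a - c)) ^ 2) :=
      fun a => mul_le_mul_of_nonneg_left (exp_le_quad (hb a)) (hp a).le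
    calc Z' ≤ ∑ a, p a * (1 + η * (g a - c) + (η * (g a - c)) ^ 2) :=
          Finset.sum_le_sum (fun a _ => hpt a)
      _ = 1 + η * S + η ^ 2 * T := by
          have key : ∀ a, p a * (1 + η * (g a - c) + (η * (g a - c)) ^ 2)
              = p a + η * (p a * (g a - c)) + η ^ 2 * (p a * (g a - c) ^ 2) :=
            fun a => by ring
          rw [Finset.sum_congr rfl fun a _ => key a, Finset.sum_add_distrib,
            Finset.sum_add_distrib, hs, ← Finset.mul_sum, ← Finset.mul_sum]
  have hWpos : 0 < 1 + η * S + η ^ 2 * T := lt_of_lt_of_le hZ'pos hZ'le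
  have hlog : Real.log Z' ≤ η * S + η ^ 2 * T := by
    calc Real.log Z' ≤ Real.log (1 + η * S + η ^ 2 * T) := by
          gcongr
      _ ≤ η * S + η ^ 2 * T := by
          linarith [Real.log_le_sub_one_of_pos hWpos]
  rw [hKL, hSg, hZZ', Real.log_mul (Real.exp_ne_zero _) hZ'pos.ne', Real.log_exp]
  have : η * (S + c) = η * S + η * c := by ring
  rw [this]
  linarith

set_option maxHeartbeats 1000000 in
lemma one_player {A B : Type*} [Fintype A] [Fintype B]
    (w : A → B → ℝ) (umax : ℝ) (humax : 0 ≤ umax) (hw : ∀ a b, |w a b| ≤ umax)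
    (μ ρ η : ℝ) (hμ : 0 < μ) (hρ : 0 < ρ) (hη : 0 < η)
    (r1 : A → ℝ) (hr : ∀ a, 0 ≤ r1 a)
    (σ1 : A → ℝ) (σ2 : B → ℝ) (hσ1 : isInterior σ1) (hσ2 : isSimplex σ2)
    (c : ℝ) (hst : ∀ a, σ1 a * (q1 w σ2 a - c) + μ * (r1 a - σ1 a) = 0)
    (x : A → ℝ) (y : B → ℝ) (hx : isInterior x) (hy : isSimplex y)
    (hρx : ∀ a, ρ ≤ x a)
    (M : ℝ) (hM : ∀ a, r1 a ≤ M)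
    (hηD : η * (2 * umax + μ / ρ * M) ≤ 1) :
    KL x (mwuStep η (qmu1 w μ r1 x y) x) ≤
      2 * η ^ 2 * umax ^ 2 * (l1norm (fun b => y b - σ2 b)) ^ 2 +
      2 * η ^ 2 * μ ^ 2 * ∑ a, r1 a ^ 2 * (1 / σ1 a - 1 / x a) ^ 2 := by
  classical
  set L : ℝ := l1norm (fun b => y b - σ2 b) with hLdef
  have hLeq : L = ∑ b, |y b - σ2 b| := rfl
  have hLnn : 0 ≤ L := by
    rw [hLeq]; exact Finset.sum_nonneg fun b _ => abs_nonneg _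
  -- |q1| bounds
  have hq_abs : ∀ (p : B → ℝ), (∀ b, 0 ≤ p b) → (∑ b, p b = 1) →
      ∀ a, |q1 w p a| ≤ umax := by
    intro p hp hs a
    calc |q1 w p a| ≤ ∑ b, |p b * w a b| := Finset.abs_sum_le_sum_abs _ _
      _ ≤ ∑ b, p b * umax := Finset.sum_le_sum fun b _ => by
          rw [abs_mul, abs_of_nonneg (hp b)]
          exact mul_le_mul_of_nonneg_left (hw a b) (hp b)
      _ = umax := by rw [← Finset.sum_mul, hs, one_mul]
  have hdiff_abs : ∀ a, |q1 w y a - q1 w σ2 a| ≤ umax * L := by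
    intro a
    have hd : q1 w y a - q1 w σ2 a = ∑ b, (y b - σ2 b) * w a b := by
      unfold q1
      rw [← Finset.sum_sub_distrib]
      exact Finset.sum_congr rfl fun b _ => by ring
    rw [hd]
    calc |∑ b, (y b - σ2 b) * w a b| ≤ ∑ b, |(y b - σ2 b) * w a b| :=
          Finset.abs_sum_le_sum_abs _ _
      _ ≤ ∑ b, |y b - σ2 b| * umax := Finset.sum_le_sum fun b _ => by
          rw [abs_mul]
          exact mul_le_mul_of_nonneg_left (hw a b) (abs_nonneg _)
      _ = umax * L := by rw [← Finset.sum_mul, hLeq, mul_comm]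
  -- stationary identity
  have hc : ∀ a, c = q1 w σ2 a + μ * r1 a / σ1 a - μ := by
    intro a
    have h := hst a
    have hσ := (hσ1.1 a).ne'
    field_simp
    nlinarith [hst a]
  -- key decomposition
  have hkey : ∀ a, qmu1 w μ r1 x y a - c
      = (q1 w y a - q1 w σ2 a) + μ * r1 a * (1 / x a - 1 / σ1 a) := by
    intro a
    rw [hc a]
    unfold qmu1
    have hxne := (hx.1 a).ne'
    have hσne := (hσ1.1 a).ne'
    field_simp
    ring
  -- step bound hypothesis
  have hb : ∀ a, η * (qmu1 w μ r1 x y a - c) ≤ 1 := by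
    intro a
    have h1 : qmu1 w μ r1 x y a - c ≤ 2 * umax + μ / ρ * M := by
      rw [hkey a]
      have hy1 := abs_le.mp (hq_abs y hy.1 hy.2 a)
      have hy2 := abs_le.mp (hq_abs σ2 hσ2.1 hσ2.2 a)
      have hxinv : 1 / x a ≤ 1 / ρ := one_div_le_one_div_of_le hρ (hρx a)
      have hσpos := hσ1.1 a
      have hσinv : 0 ≤ 1 / σ1 a := by positivity
      have hB : μ * r1 a * (1 / x a - 1 / σ1 a) ≤ μ / ρ * M := by
        have h2 : μ * r1 a * (1 / x a - 1 / σ1 a) ≤ μ * r1 a * (1 / x a) := by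
          have : 0 ≤ μ * r1 a := mul_nonneg hμ.le (hr a)
          nlinarith
        have h3 : μ * r1 a * (1 / x a) ≤ μ * M * (1 / ρ) := by
          have hxpos := hx.1 a
          have hxinv0 : 0 ≤ 1 / x a := by positivity
          nlinarith [mul_nonneg hμ.le (hr a), hM a, mul_le_mul_of_nonneg_left hxinv (mul_nonneg hμ.le (hr a)), mul_le_mul_of_nonneg_right (mul_le_mul_of_nonneg_left (hM a) hμ.le) (le_of_lt (by positivity : (0:ℝ) < 1/ρ))]
        calc μ * r1 a * (1 / x a - 1 / σ1 a) ≤ μ * M * (1 / ρ) := le_trans h2 h3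
          _ = μ / ρ * M := by ring
      linarith
    calc η * (qmu1 w μ r1 x y a - c) ≤ η * (2 * umax + μ / ρ * M) :=
          mul_le_mul_of_nonneg_left h1 hη.le
      _ ≤ 1 := hηD
  have hmain := kl_mwu_bound η (qmu1 w μ r1 x y) c x hx.1 hx.2 hb
  refine le_trans hmain ?_
  -- pointwise square bound
  have hpt : ∀ a, x a * (qmu1 w μ r1 x y a - c) ^ 2
      ≤ x a * (2 * umax ^ 2 * L ^ 2) + 2 * μ ^ 2 * (r1 a ^ 2 * (1 / σ1 a - 1 / x a) ^ 2) := by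
    intro a
    have hd2 : (qmu1 w μ r1 x y a - c) ^ 2
        ≤ 2 * umax ^ 2 * L ^ 2 + 2 * μ ^ 2 * (r1 a ^ 2 * (1 / σ1 a - 1 / x a) ^ 2) := by
      obtain ⟨P, hPd⟩ : ∃ P, P = q1 w y a - q1 w σ2 a := ⟨_, rfl⟩
      obtain ⟨Q, hQd⟩ : ∃ Q, Q = μ * r1 a * (1 / x a - 1 / σ1 a) := ⟨_, rfl⟩
      obtain ⟨s, hsd⟩ : ∃ s, s = r1 a ^ 2 * (1 / σ1 a - 1 / x a) ^ 2 := ⟨_, rfl⟩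
      rw [hkey a, ← hPd, ← hQd, ← hsd]
      have hPa := abs_le.mp (hdiff_abs a)
      rw [← hPd] at hPa
      have hP2 : P ^ 2 ≤ umax ^ 2 * L ^ 2 := by
        rw [← mul_pow]
        exact sq_le_sq' hPa.1 hPa.2
      have hQ2 : Q ^ 2 = μ ^ 2 * s := by rw [hQd, hsd]; ring
      have hsq : (P + Q) ^ 2 ≤ 2 * P ^ 2 + 2 * Q ^ 2 := by nlinarith [sq_nonneg (P - Q)]
      linarith
    have hx1 : x a ≤ 1 := by
      rw [← hx.2]
      exact Finset.single_le_sum (fun a _ => (hx.1 a).le) (Finset.mem_univ a)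
    have hnn : 0 ≤ 2 * μ ^ 2 * (r1 a ^ 2 * (1 / σ1 a - 1 / x a) ^ 2) := by positivity
    nlinarith [mul_le_mul_of_nonneg_left hd2 (hx.1 a).le, (hx.1 a).le]
  calc η ^ 2 * ∑ a, x a * (qmu1 w μ r1 x y a - c) ^ 2
      ≤ η ^ 2 * ∑ a, (x a * (2 * umax ^ 2 * L ^ 2)
          + 2 * μ ^ 2 * (r1 a ^ 2 * (1 / σ1 a - 1 / x a) ^ 2)) := by
        have := Finset.sum_le_sum (fun a (_ : a ∈ Finset.univ) => hpt a)
        exact mul_le_mul_of_nonneg_left this (sq_nonneg η)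
    _ = 2 * η ^ 2 * umax ^ 2 * L ^ 2
        + 2 * η ^ 2 * μ ^ 2 * ∑ a, r1 a ^ 2 * (1 / σ1 a - 1 / x a) ^ 2 := by
        rw [Finset.sum_add_distrib, ← Finset.sum_mul, hx.2, ← Finset.mul_sum]
        ring

/-- **Lemma 3 (quasi-metric upper bound on the one-step KL divergence).** -/
theorem kl_path_upper_bound {A1 A2 : Type*} [Fintype A1] [Fintype A2]
    [Nonempty A1] [Nonempty A2]
    (u : A1 → A2 → ℝ) (umax : ℝ) (hu : ∀ a b, |u a b| ≤ umax)
    (μ : ℝ) (hμ : 0 < μ ∧ μ ≤ 1)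
    (r : (A1 → ℝ) × (A2 → ℝ)) (hr1 : isInterior r.1) (hr2 : isInterior r.2)
    (σst : (A1 → ℝ) × (A2 → ℝ)) (hst : isStationary u μ r σst)
    (hst1 : isInterior σst.1) (hst2 : isInterior σst.2)
    (x : A1 → ℝ) (y : A2 → ℝ) (hx : isInterior x) (hy : isInterior y)
    (ρ : ℝ) (hρ : 0 < ρ) (hρx : ∀ a, ρ ≤ x a) (hρy : ∀ b, ρ ≤ y b)
    (η : ℝ)
    (hη : 0 < η ∧
      η < 1 / (2 * umax + (μ / ρ) * max (⨆ a, r.1 a) (⨆ b, r.2 b)))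
    (x' : A1 → ℝ) (y' : A2 → ℝ)
    (hx' : x' = mwuStep η (qmu1 u μ r.1 x y) x)
    (hy' : y' = mwuStep η (qmu2 u μ r.2 x y) y) :
    KL x x' + KL y y' ≤
      8 * η ^ 2 * umax ^ 2 *
        ((l1norm (fun a => x a - σst.1 a)) ^ 2 +
         (l1norm (fun b => y b - σst.2 b)) ^ 2) +
      8 * η ^ 2 * μ ^ 2 *
        ((∑ a, r.1 a ^ 2 * (1 / σst.1 a - 1 / x a) ^ 2) +
         (∑ b, r.2 b ^ 2 * (1 / σst.2 b - 1 / y b) ^ 2)) := by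
  classical
  obtain ⟨hη0, hη1⟩ := hη
  obtain ⟨hμ0, -⟩ := hμ
  have humax : 0 ≤ umax :=
    le_trans (abs_nonneg _) (hu (Classical.arbitrary A1) (Classical.arbitrary A2))
  set M : ℝ := max (⨆ a, r.1 a) (⨆ b, r.2 b) with hMdef
  have hM1 : ∀ a, r.1 a ≤ M := fun a =>
    le_trans (le_ciSup (Set.Finite.bddAbove (Set.finite_range _)) a) (le_max_left _ _)
  have hM2 : ∀ b, r.2 b ≤ M := fun b =>
    le_trans (le_ciSup (Set.Finite.bddAbove (Set.finite_range _)) b) (le_max_right _ _)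
  have hMpos : 0 < M := lt_of_lt_of_le (hr1.1 (Classical.arbitrary A1)) (hM1 _)
  have hD : 0 < 2 * umax + μ / ρ * M := by
    have h1 : 0 < μ / ρ * M := mul_pos (div_pos hμ0 hρ) hMpos
    linarith
  have hηD : η * (2 * umax + μ / ρ * M) ≤ 1 := by
    have h2 : η * (2 * umax + μ / ρ * M)
        < 1 / (2 * umax + μ / ρ * M) * (2 * umax + μ / ρ * M) :=
      mul_lt_mul_of_pos_right hη1 hD
    rw [one_div_mul_cancel hD.ne'] at h2
    exact h2.le
  obtain ⟨hs1, hs2, hstat1, hstat2⟩ := hst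
  have hysimp : isSimplex y := ⟨fun b => (hy.1 b).le, hy.2⟩
  have hxsimp : isSimplex x := ⟨fun a => (hx.1 a).le, hx.2⟩
  have hst2simp : isSimplex σst.2 := ⟨fun b => (hst2.1 b).le, hst2.2⟩
  have hst1simp : isSimplex σst.1 := ⟨fun a => (hst1.1 a).le, hst1.2⟩
  have hK1 : KL x (mwuStep η (qmu1 u μ r.1 x y) x) ≤
      2 * η ^ 2 * umax ^ 2 * (l1norm (fun b => y b - σst.2 b)) ^ 2 +
      2 * η ^ 2 * μ ^ 2 * ∑ a, r.1 a ^ 2 * (1 / σst.1 a - 1 / x a) ^ 2 :=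
    one_player u umax humax hu μ ρ η hμ0 hρ hη0 r.1 (fun a => (hr1.1 a).le)
      σst.1 σst.2 hst1 hst2simp (v1 u σst.1 σst.2) hstat1 x y hx hysimp hρx M hM1 hηD
  have hw2 : ∀ (b : A2) (a : A1), |(fun b a => - u a b) b a| ≤ umax := by
    intro b a
    simp only [abs_neg]
    exact hu a b
  have hK2 : KL y (mwuStep η (qmu2 u μ r.2 x y) y) ≤
      2 * η ^ 2 * umax ^ 2 * (l1norm (fun a => x a - σst.1 a)) ^ 2 +
      2 * η ^ 2 * μ ^ 2 * ∑ b, r.2 b ^ 2 * (1 / σst.2 b - 1 / y b) ^ 2 :=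
    one_player (fun b a => - u a b) umax humax hw2 μ ρ η hμ0 hρ hη0 r.2
      (fun b => (hr2.1 b).le) σst.2 σst.1 hst2 hst1simp (- v1 u σst.1 σst.2)
      hstat2 y x hy hxsimp hρy M hM2 hηD
  rw [hx', hy']
  have hC1 : 0 ≤ η ^ 2 * umax ^ 2 *
      ((l1norm (fun a => x a - σst.1 a)) ^ 2 + (l1norm (fun b => y b - σst.2 b)) ^ 2) := by
    positivity
  have hC2 : 0 ≤ η ^ 2 * μ ^ 2 *
      ((∑ a, r.1 a ^ 2 * (1 / σst.1 a - 1 / x a) ^ 2) +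
       (∑ b, r.2 b ^ 2 * (1 / σst.2 b - 1 / y b) ^ 2)) := by
    have hA : 0 ≤ ∑ a, r.1 a ^ 2 * (1 / σst.1 a - 1 / x a) ^ 2 :=
      Finset.sum_nonneg fun a _ => by positivity
    have hB : 0 ≤ ∑ b, r.2 b ^ 2 * (1 / σst.2 b - 1 / y b) ^ 2 :=
      Finset.sum_nonneg fun b _ => by positivity
    positivity
  nlinarith [hK1, hK2, hC1, hC2]
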